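/- Entropy function inequality: For every ρ ∈ (0,1) and every x ∈ [0, ρ), the function f_ρ(x) := ρ·log ρ + (1 − x)·log(1 − x) − (ρ − x)·log(ρ − x) satisfies f_ρ(x) ≤ x·log ρ. -/

import Mathlib

/-- **Entropy function inequality.**
For every `ρ ∈ (0,1)` and every `x ∈ [0, ρ)`, the function
`f_ρ(x) := ρ log ρ + (1 − x) log (1 − x) − (ρ − x) log (ρ − x)`
satisfies `f_ρ(x) ≤ x log ρ`. -/
theorem entropy_function_inequality (ρ : ℝ) (hρ : ρ ∈ Set.Ioo (0 : ℝ) 1)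
    (x : ℝ) (hx : x ∈ Set.Ico (0 : ℝ) ρ) :
    ρ * Real.log ρ + (1 - x) * Real.log (1 - x) - (ρ - x) * Real.log (ρ - x)
      ≤ x * Real.log ρ := by
  obtain ⟨hρ0, hρ1⟩ := hρ
  obtain ⟨hx0, hxρ⟩ := hx
  have hρx : (0:ℝ) < ρ - x := by linarith
  set t : ℝ := (ρ - x) / ρ with ht
  have ht0 : (0:ℝ) ≤ t := le_of_lt (div_pos hρx hρ0)
  have key := Real.convexOn_mul_log.2 (Set.mem_Ici.mpr (zero_le_one)) (Set.mem_Ici.mpr ht0)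
    (by linarith : (0:ℝ) ≤ 1 - ρ) (le_of_lt hρ0) (by ring)
  have hcomb : (1 - ρ) • (1:ℝ) + ρ • t = 1 - x := by
    rw [ht, smul_eq_mul, smul_eq_mul, mul_div_assoc', mul_div_cancel_left₀ _ (ne_of_gt hρ0)]
    ring
  rw [hcomb] at key
  simp only [Real.log_one, mul_zero, smul_zero, zero_add, smul_eq_mul] at key
  -- key : (1 - x) * Real.log (1 - x) ≤ ρ * (t * Real.log t)
  have hlogt : Real.log t = Real.log (ρ - x) - Real.log ρ :=
    Real.log_div (ne_of_gt hρx) (ne_of_gt hρ0)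
  have : ρ * (t * Real.log t) = (ρ - x) * (Real.log (ρ - x) - Real.log ρ) := by
    rw [hlogt, ht]
    field_simp
  rw [this] at key
  nlinarith [key]
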